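/- Fix h ∈ ℝ and for x ∈ ι define the one-site Fermi Ornstein–Uhlenbeck generator L⁰_x acting on bounded operators g on ℋ by L⁰_x g = e^{h/2} ( (v_x g − g v_x) v_x* + v_x (g v_x* − v_x* g) ) + e^{−h/2} ( (v_x* g − g v_x*) v_x + v_x* (g v_x − v_x g) ). Let Λ be a finite subset of ι and let f belong to the star-subalgebra of B(ℋ) generated by {a_x : x ∈ Λ}, and set 𝓛₀ f = ∑_{x∈Λ} L⁰_x f. Then for every y ∈ ι: ∂_y(𝓛₀ f) − ∑_{x∈Λ} L⁰_x(∂_y f) = −2 cosh(h/2) · ∂_y f, and ∂̄_y(𝓛₀ f) − ∑_{x∈Λ} L⁰_x(∂̄_y f) = −2 cosh(h/2) · ∂̄_y f. -/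

import Mathlib

/-- The fermionic Fock space over the lattice `ι`: the Hilbert space `ℓ²` of
square-summable complex families indexed by the finite subsets of `ι`. -/
noncomputable abbrev FockSpace (ι : Type*) := lp (fun _ : Finset ι => ℂ) 2

/-- The canonical orthonormal basis vector `e_X` of the Fock space. -/
noncomputable def fockBasis {ι : Type*} [DecidableEq ι] (X : Finset ι) : FockSpace ι :=
  lp.single 2 X (1 : ℂ)

set_option linter.unusedSectionVars false
namespace FermiAux

open scoped ComplexConjugate

variable {ι : Type*} [DecidableEq ι]

lemma fock_coord (v : FockSpace ι) (Y : Finset ι) :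
    (v : ∀ _ : Finset ι, ℂ) Y = inner (𝕜 := ℂ) (fockBasis Y) v := by
  rw [fockBasis, lp.inner_single_left]
  simp [RCLike.inner_apply]

lemma fockBasis_apply (X Y : Finset ι) :
    (fockBasis X : ∀ _ : Finset ι, ℂ) Y = if Y = X then 1 else 0 := by
  rw [fockBasis, lp.single_apply]
  split <;> simp_all

lemma fock_vec_ext {v u : FockSpace ι}
    (h : ∀ Y : Finset ι, (v : ∀ _ : Finset ι, ℂ) Y = (u : ∀ _ : Finset ι, ℂ) Y) : v = u := by
  apply Subtype.ext
  funext Y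
  exact h Y

lemma fock_ext {T S : FockSpace ι →L[ℂ] FockSpace ι}
    (h : ∀ X : Finset ι, T (fockBasis X) = S (fockBasis X)) : T = S := by
  apply ContinuousLinearMap.ext
  intro v
  have hv : HasSum (fun X : Finset ι => lp.single 2 X ((v : ∀ _ : Finset ι, ℂ) X)) v :=
    lp.hasSum_single (by norm_num) v
  have h1 : ∀ X : Finset ι, T (lp.single 2 X ((v : ∀ _ : Finset ι, ℂ) X))
      = S (lp.single 2 X ((v : ∀ _ : Finset ι, ℂ) X)) := by
    intro X
    have e : lp.single (E := fun _ : Finset ι => ℂ) 2 X ((v : ∀ _ : Finset ι, ℂ) X)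
        = ((v : ∀ _ : Finset ι, ℂ) X) • fockBasis X := by
      rw [fockBasis, ← lp.single_smul]
      norm_num
    rw [e, map_smul, map_smul, h]
  have hT := hv.mapL T
  have hS := hv.mapL S
  simp only [h1] at hT
  exact hT.unique hS

lemma inner_fockBasis (X Y : Finset ι) :
    inner (𝕜 := ℂ) (fockBasis X) (fockBasis Y) = if X = Y then (1 : ℂ) else 0 := by
  rw [← fock_coord, fockBasis_apply]

end FermiAux

namespace FermiAux

/-- The sign `(-1)^{#{y ∈ X | y < x}}`. -/
noncomputable def eps {ι : Type*} [LinearOrder ι] (x : ι) (X : Finset ι) : ℂ :=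
  (-1) ^ (X.filter (fun y => y < x)).card

variable {ι : Type*} [LinearOrder ι]

lemma eps_mul_self (x : ι) (X : Finset ι) : eps x X * eps x X = 1 := by
  rw [eps, ← pow_add, ← two_mul, pow_mul]
  norm_num

lemma eps_erase_self {x : ι} (X : Finset ι) : eps x (X.erase x) = eps x X := by
  unfold eps
  congr 1
  rw [Finset.filter_erase, Finset.erase_eq_of_notMem]
  simp

lemma eps_insert_self {x : ι} (X : Finset ι) : eps x (insert x X) = eps x X := by
  unfold eps
  rw [Finset.filter_insert, if_neg (lt_irrefl x)]

lemma eps_insert {x y : ι} (hxy : y ≠ x) {X : Finset ι} (hy : y ∉ X) :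
    eps x (insert y X) = (if y < x then -1 else 1) * eps x X := by
  unfold eps
  rw [Finset.filter_insert]
  by_cases hlt : y < x
  · rw [if_pos hlt, if_pos hlt, Finset.card_insert_of_notMem (by simp [hy]), pow_succ]
    ring
  · rw [if_neg hlt, if_neg hlt, one_mul]

lemma eps_of_erase {x y : ι} (hxy : y ≠ x) {X : Finset ι} (hy : y ∈ X) :
    eps x X = (if y < x then -1 else 1) * eps x (X.erase y) := by
  conv_lhs => rw [← Finset.insert_erase hy]
  rw [eps_insert hxy (Finset.notMem_erase y X)]

end FermiAux

namespace FermiAux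
section Star
variable {ι : Type*} [LinearOrder ι]
variable (a : ι → (FockSpace ι →L[ℂ] FockSpace ι))
variable (ha : ∀ (x : ι) (X : Finset ι),
      a x (fockBasis X) =
        if x ∈ X then
          ((-1 : ℂ) ^ (X.filter (fun y => y < x)).card) • fockBasis (X.erase x)
        else 0)
variable (w : FockSpace ι →L[ℂ] FockSpace ι)
variable (hw : ∀ X : Finset ι, w (fockBasis X) = ((-1 : ℂ) ^ X.card) • fockBasis X)

include ha in
lemma ha_eps (x : ι) (X : Finset ι) :
    a x (fockBasis X) = if x ∈ X then eps x X • fockBasis (X.erase x) else 0 :=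
  ha x X

lemma conj_eps (x : ι) (X : Finset ι) :
    (starRingEnd ℂ) (eps x X) = eps x X := by
  rw [eps, map_pow, map_neg, map_one]

include ha in
lemma ha_star (x : ι) (X : Finset ι) :
    star (a x) (fockBasis X) =
      if x ∈ X then 0 else eps x X • fockBasis (insert x X) := by
  apply fock_vec_ext
  intro Y
  rw [fock_coord, fock_coord, ContinuousLinearMap.star_eq_adjoint,
    ContinuousLinearMap.adjoint_inner_right, ha_eps a ha x Y]
  by_cases hxY : x ∈ Y <;> by_cases hxX : x ∈ X
  · have h1 : Y.erase x ≠ X := by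
      intro h
      rw [← h] at hxX
      simp at hxX
    simp [hxY, hxX, inner_smul_left, inner_fockBasis, h1]
  · have h1 : (Y.erase x = X) ↔ (Y = insert x X) := by
      constructor
      · intro h
        rw [← h, Finset.insert_erase hxY]
      · intro h
        rw [h, Finset.erase_insert hxX]
    by_cases h2 : Y = insert x X
    · have h3 : eps x Y = eps x X := by rw [h2, eps_insert_self]
      simp [hxY, hxX, inner_smul_left, inner_fockBasis, h1.mpr h2, h2, conj_eps, h3, eps_insert_self]
      left; rw [fockBasis, fockBasis, lp.norm_single (by norm_num), lp.norm_single (by norm_num)]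
    · simp [hxY, hxX, inner_smul_left, inner_fockBasis, h2, (h1.not).mpr h2]
  · simp [hxY, hxX, inner_fockBasis]
  · have h2 : Y ≠ insert x X := by
      intro h
      rw [h] at hxY
      simp at hxY
    simp [hxY, hxX, inner_fockBasis, h2]

end Star
end FermiAux

namespace FermiAux
section Rel
variable {ι : Type*} [LinearOrder ι]
variable (a : ι → (FockSpace ι →L[ℂ] FockSpace ι))
variable (ha : ∀ (x : ι) (X : Finset ι),
      a x (fockBasis X) =
        if x ∈ X then
          ((-1 : ℂ) ^ (X.filter (fun y => y < x)).card) • fockBasis (X.erase x)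
        else 0)
variable (w : FockSpace ι →L[ℂ] FockSpace ι)
variable (hw : ∀ X : Finset ι, w (fockBasis X) = ((-1 : ℂ) ^ X.card) • fockBasis X)

lemma eps_erase {x y : ι} (hxy : x ≠ y) {X : Finset ι} (hx : x ∈ X) :
    eps y (X.erase x) = (if x < y then -1 else 1) * eps y X := by
  rw [eps_of_erase hxy hx, ← mul_assoc]
  by_cases hlt : x < y <;> simp [hlt]

lemma sgn_add {x y : ι} (hxy : x ≠ y) :
    (if y < x then (-1 : ℂ) else 1) + (if x < y then -1 else 1) = 0 := by
  rcases hxy.lt_or_gt with hlt | hlt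
  · rw [if_neg (asymm hlt), if_pos hlt]; ring
  · rw [if_pos hlt, if_neg (asymm hlt)]; ring

include ha in
lemma rel_aa (x y : ι) : a x * a y + a y * a x = 0 := by
  apply fock_ext
  intro X
  simp only [ContinuousLinearMap.add_apply, ContinuousLinearMap.mul_apply,
    ContinuousLinearMap.zero_apply]
  by_cases hxy : x = y
  · subst hxy
    rw [ha_eps a ha]
    by_cases hx : x ∈ X
    · rw [if_pos hx, map_smul, ha_eps a ha, if_neg (Finset.notMem_erase x X)]
      simp
    · rw [if_neg hx]
      simp
  · rw [ha_eps a ha y X, ha_eps a ha x X]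
    by_cases hy : y ∈ X <;> by_cases hx : x ∈ X
    · rw [if_pos hy, if_pos hx, map_smul, map_smul, ha_eps a ha, ha_eps a ha,
        if_pos (Finset.mem_erase.mpr ⟨hxy, hx⟩),
        if_pos (Finset.mem_erase.mpr ⟨Ne.symm hxy, hy⟩)]
      rw [smul_smul, smul_smul, Finset.erase_right_comm (a := y) (b := x), ← add_smul]
      have hsc : eps y X * eps x (X.erase y) + eps x X * eps y (X.erase x) = 0 := by
        rw [eps_erase (Ne.symm hxy) hy (X := X), eps_erase hxy hx (X := X)]
        linear_combination eps y X * eps x X * sgn_add hxy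
      rw [hsc, zero_smul]
    · rw [if_pos hy, if_neg hx, map_smul, map_zero, ha_eps a ha,
        if_neg (fun hm => hx (Finset.mem_of_mem_erase hm))]
      simp
    · rw [if_neg hy, if_pos hx, map_zero, map_smul, ha_eps a ha,
        if_neg (fun hm => hy (Finset.mem_of_mem_erase hm))]
      simp
    · rw [if_neg hy, if_neg hx]
      simp
include hw in
lemma rel_ww : w * w = 1 := by
  apply fock_ext
  intro X
  rw [ContinuousLinearMap.mul_apply, hw, map_smul, hw, smul_smul, ← pow_add, ← two_mul,
    pow_mul]
  norm_num

include hw in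
lemma rel_wstar : star w = w := by
  apply fock_ext
  intro X
  apply fock_vec_ext
  intro Y
  rw [fock_coord, fock_coord, ContinuousLinearMap.star_eq_adjoint,
    ContinuousLinearMap.adjoint_inner_right, hw, hw, inner_smul_left, inner_smul_right]
  simp only [inner_fockBasis]
  by_cases hXY : Y = X
  · subst hXY
    simp
  · simp [hXY]

include ha hw in
lemma rel_wa (x : ι) : w * a x = -(a x * w) := by
  apply fock_ext
  intro X
  rw [ContinuousLinearMap.neg_apply, ContinuousLinearMap.mul_apply,
    ContinuousLinearMap.mul_apply, hw, map_smul, ha_eps a ha]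
  by_cases hx : x ∈ X
  · rw [if_pos hx, map_smul, hw, smul_smul, smul_smul, ← neg_smul,
      ← Finset.card_erase_add_one hx, pow_succ]
    congr 1
    ring
  · rw [if_neg hx]
    simp

include ha in
lemma rel_astar_a (x y : ι) :
    a x * star (a y) + star (a y) * a x = if x = y then 1 else 0 := by
  apply fock_ext
  intro X
  simp only [ContinuousLinearMap.add_apply, ContinuousLinearMap.mul_apply]
  by_cases hxy : x = y
  · subst hxy
    rw [if_pos rfl, ContinuousLinearMap.one_apply, ha_star a ha, ha_eps a ha]
    by_cases hx : x ∈ X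
    · rw [if_pos hx, if_pos hx, map_zero, map_smul, ha_star a ha,
        if_neg (Finset.notMem_erase x X), smul_smul, eps_erase_self,
        Finset.insert_erase hx, eps_mul_self, zero_add, one_smul]
    · rw [if_neg hx, if_neg hx, map_zero, map_smul, ha_eps a ha,
        if_pos (Finset.mem_insert_self x X), smul_smul, eps_insert_self,
        Finset.erase_insert hx, eps_mul_self, add_zero, one_smul]
  · rw [if_neg hxy, ContinuousLinearMap.zero_apply, ha_star a ha y X, ha_eps a ha x X]
    by_cases hy : y ∈ X
    · rw [if_pos hy, map_zero]
      by_cases hx : x ∈ X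
      · rw [if_pos hx, map_smul, ha_star a ha,
          if_pos (Finset.mem_erase.mpr ⟨Ne.symm hxy, hy⟩), smul_zero, zero_add]
      · rw [if_neg hx]
        simp
    · rw [if_neg hy, map_smul, ha_eps a ha]
      by_cases hx : x ∈ X
      · rw [if_pos (Finset.mem_insert.mpr (Or.inr hx)), if_pos hx, map_smul,
          ha_star a ha, if_neg (fun hm => hy (Finset.mem_of_mem_erase hm)),
          smul_smul, smul_smul, Finset.erase_insert_of_ne (Ne.symm hxy), ← add_smul]
        have hsc : eps y X * eps x (insert y X) + eps x X * eps y (X.erase x) = 0 := by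
          rw [eps_insert (Ne.symm hxy) hy, eps_erase hxy hx]
          linear_combination eps y X * eps x X * sgn_add hxy
        rw [hsc, zero_smul]
      · rw [if_neg (fun hm => (Finset.mem_insert.mp hm).elim hxy hx), if_neg hx]
        simp
end Rel
end FermiAux

namespace FermiAux
section Key
variable {A : Type*} [Ring A] [Algebra ℂ A]

/-- Key abstract intertwining computation. -/
lemma fermi_key (W V P Q G : A) (dP dQ : ℂ)
    (hWP : W * P = -(P * W)) (hWQ : W * Q = -(Q * W))
    (hVP : V * P + P * V = dP • (1 : A)) (hVQ : V * Q + Q * V = dQ • (1 : A)) :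
    W * (V * ((P * G - G * P) * Q + P * (G * Q - Q * G))
        - ((P * G - G * P) * Q + P * (G * Q - Q * G)) * V)
      - ((P * (W * (V * G - G * V)) - (W * (V * G - G * V)) * P) * Q
        + P * ((W * (V * G - G * V)) * Q - Q * (W * (V * G - G * V))))
      = -(dP • (W * (Q * G - G * Q))) - dQ • (W * (P * G - G * P)) := by
  have eVP : V * P = dP • (1 : A) - P * V := eq_sub_of_add_eq hVP
  have ePV : P * V = dP • (1 : A) - V * P := eq_sub_of_add_eq (by rw [add_comm]; exact hVP)
  have eVQ : V * Q = dQ • (1 : A) - Q * V := eq_sub_of_add_eq hVQ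
  have eQV : Q * V = dQ • (1 : A) - V * Q := eq_sub_of_add_eq (by rw [add_comm]; exact hVQ)
  have e1 : ∀ r : A, V * (P * r) = dP • r - P * (V * r) := by
    intro r; rw [← mul_assoc, eVP, sub_mul, smul_mul_assoc, one_mul, mul_assoc]
  have e2 : ∀ r : A, V * (Q * r) = dQ • r - Q * (V * r) := by
    intro r; rw [← mul_assoc, eVQ, sub_mul, smul_mul_assoc, one_mul, mul_assoc]
  have e3 : ∀ r : A, W * (P * r) = -(P * (W * r)) := by
    intro r; rw [← mul_assoc, hWP, neg_mul, mul_assoc]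
  have e4 : ∀ r : A, W * (Q * r) = -(Q * (W * r)) := by
    intro r; rw [← mul_assoc, hWQ, neg_mul, mul_assoc]
  simp only [mul_sub, sub_mul, mul_add, add_mul, mul_assoc, e1, e2, e3, e4, eQV, ePV,
    smul_sub, smul_add, mul_smul_comm, smul_mul_assoc, mul_one, one_mul, mul_neg, neg_mul,
    sub_mul, mul_sub]
  abel
end Key
section Pairs
variable {R : Type*} [Ring R] {w p q : R}

lemma pair_vv (hww : w * w = 1) (hwp : w * p = -(p * w)) :
    (w * p) * (w * q) = -(p * q) := by
  have hpw : p * w = -(w * p) := by rw [hwp, neg_neg]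
  rw [mul_assoc w p (w * q), ← mul_assoc p w q, hpw, neg_mul, mul_neg,
    ← mul_assoc w (w * p) q, ← mul_assoc w w p, hww, one_mul]

lemma pair_sw_v (hww : w * w = 1) : (q * w) * (w * p) = q * p := by
  rw [mul_assoc, ← mul_assoc w w p, hww, one_mul]

lemma pair_v_sw (hww : w * w = 1) (hwp : w * p = -(p * w)) (hwq : w * q = -(q * w)) :
    (w * p) * (q * w) = p * q := by
  have hqw : q * w = -(w * q) := by rw [hwq, neg_neg]
  rw [hqw, mul_neg, pair_vv hww hwp, neg_neg]

lemma pair_sw_sw (hww : w * w = 1) (hwq : w * q = -(q * w)) :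
    (p * w) * (q * w) = -(p * q) := by
  rw [mul_assoc p w (q * w), ← mul_assoc w q w, hwq, neg_mul, mul_neg,
    mul_assoc q w w, hww, mul_one]

end Pairs
section VRel
variable {ι : Type*} [LinearOrder ι]
variable (a : ι → (FockSpace ι →L[ℂ] FockSpace ι))
variable (ha : ∀ (x : ι) (X : Finset ι),
      a x (fockBasis X) =
        if x ∈ X then
          ((-1 : ℂ) ^ (X.filter (fun y => y < x)).card) • fockBasis (X.erase x)
        else 0)
variable (w : FockSpace ι →L[ℂ] FockSpace ι)
variable (hw : ∀ X : Finset ι, w (fockBasis X) = ((-1 : ℂ) ^ X.card) • fockBasis X)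

include ha hw

lemma rel_aw (x : ι) : a x * w = -(w * a x) := by
  rw [rel_wa a ha w hw x, neg_neg]

lemma rel_sax (x : ι) : star (w * a x) = star (a x) * w := by
  rw [star_mul, rel_wstar w hw]

lemma rel_wsa (x : ι) : w * star (a x) = -(star (a x) * w) := by
  have := congrArg star (rel_wa a ha w hw x)
  rw [star_mul, star_neg, star_mul, rel_wstar w hw] at this
  rw [← neg_neg (w * star (a x)), ← this]

lemma rel_wv (x : ι) : w * (w * a x) = -((w * a x) * w) := by
  rw [← mul_assoc, rel_ww w hw, one_mul, mul_assoc, rel_aw a ha w hw x, mul_neg,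
    ← mul_assoc, rel_ww w hw, one_mul, neg_neg]

lemma rel_ws' (x : ι) : w * star (w * a x) = -(star (w * a x) * w) := by
  rw [rel_sax a ha w hw x, ← mul_assoc, rel_wsa a ha w hw x, neg_mul, mul_assoc,
    rel_ww w hw, mul_one]

lemma rel_vv (x y : ι) :
    (w * a x) * (w * a y) + (w * a y) * (w * a x) = (0 : ℂ) • 1 := by
  rw [pair_vv (rel_ww w hw) (rel_wa a ha w hw x),
    pair_vv (rel_ww w hw) (rel_wa a ha w hw y), ← neg_add, rel_aa a ha x y, neg_zero,
    zero_smul]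

lemma rel_vs (x y : ι) :
    (w * a x) * star (w * a y) + star (w * a y) * (w * a x)
      = (if x = y then (1 : ℂ) else 0) • 1 := by
  rw [rel_sax a ha w hw y,
    pair_v_sw (rel_ww w hw) (rel_wa a ha w hw x) (rel_wsa a ha w hw y),
    pair_sw_v (rel_ww w hw), rel_astar_a a ha x y]
  split_ifs <;> simp

lemma rel_sv (x y : ι) :
    star (w * a x) * (w * a y) + (w * a y) * star (w * a x)
      = (if x = y then (1 : ℂ) else 0) • 1 := by
  rw [add_comm, rel_vs a ha w hw y x]
  simp [eq_comm]

lemma rel_ss (x y : ι) :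
    star (w * a x) * star (w * a y) + star (w * a y) * star (w * a x) = (0 : ℂ) • 1 := by
  rw [rel_sax a ha w hw x, rel_sax a ha w hw y,
    pair_sw_sw (rel_ww w hw) (rel_wsa a ha w hw y),
    pair_sw_sw (rel_ww w hw) (rel_wsa a ha w hw x), ← neg_add]
  have h0 := congrArg star (rel_aa a ha y x)
  rw [star_add, star_mul, star_mul, star_zero] at h0
  rw [h0, neg_zero, zero_smul]

end VRel
end FermiAux

namespace FermiAux
section Key2
variable {A : Type*} [Ring A] [Algebra ℂ A]

lemma fermi_key2 (W V P Q G : A) (c c' dP dQ : ℂ)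
    (hWP : W * P = -(P * W)) (hWQ : W * Q = -(Q * W))
    (hVP : V * P + P * V = dP • (1 : A)) (hVQ : V * Q + Q * V = dQ • (1 : A)) :
    W * (V * (c • ((P * G - G * P) * Q + P * (G * Q - Q * G))
              + c' • ((Q * G - G * Q) * P + Q * (G * P - P * G)))
        - (c • ((P * G - G * P) * Q + P * (G * Q - Q * G))
              + c' • ((Q * G - G * Q) * P + Q * (G * P - P * G))) * V)
      - (c • ((P * (W * (V * G - G * V)) - (W * (V * G - G * V)) * P) * Q
              + P * ((W * (V * G - G * V)) * Q - Q * (W * (V * G - G * V))))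
        + c' • ((Q * (W * (V * G - G * V)) - (W * (V * G - G * V)) * Q) * P
              + Q * ((W * (V * G - G * V)) * P - P * (W * (V * G - G * V)))))
      = -((c + c') • (dP • (W * (Q * G - G * Q)) + dQ • (W * (P * G - G * P)))) := by
  have k1 := fermi_key W V P Q G dP dQ hWP hWQ hVP hVQ
  have k2 := fermi_key W V Q P G dQ dP hWQ hWP hVQ hVP
  calc
    W * (V * (c • ((P * G - G * P) * Q + P * (G * Q - Q * G))
              + c' • ((Q * G - G * Q) * P + Q * (G * P - P * G)))
        - (c • ((P * G - G * P) * Q + P * (G * Q - Q * G))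
              + c' • ((Q * G - G * Q) * P + Q * (G * P - P * G))) * V)
      - (c • ((P * (W * (V * G - G * V)) - (W * (V * G - G * V)) * P) * Q
              + P * ((W * (V * G - G * V)) * Q - Q * (W * (V * G - G * V))))
        + c' • ((Q * (W * (V * G - G * V)) - (W * (V * G - G * V)) * Q) * P
              + Q * ((W * (V * G - G * V)) * P - P * (W * (V * G - G * V)))))
        = c • (W * (V * ((P * G - G * P) * Q + P * (G * Q - Q * G))
                  - ((P * G - G * P) * Q + P * (G * Q - Q * G)) * V)
                - ((P * (W * (V * G - G * V)) - (W * (V * G - G * V)) * P) * Q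
                  + P * ((W * (V * G - G * V)) * Q - Q * (W * (V * G - G * V)))))
          + c' • (W * (V * ((Q * G - G * Q) * P + Q * (G * P - P * G))
                  - ((Q * G - G * Q) * P + Q * (G * P - P * G)) * V)
                - ((Q * (W * (V * G - G * V)) - (W * (V * G - G * V)) * Q) * P
                  + Q * ((W * (V * G - G * V)) * P - P * (W * (V * G - G * V))))) := by
          simp only [smul_add, smul_sub, mul_smul_comm, smul_mul_assoc, mul_add, add_mul,
            mul_sub, sub_mul]
          abel
    _ = c • (-(dP • (W * (Q * G - G * Q))) - dQ • (W * (P * G - G * P)))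
          + c' • (-(dQ • (W * (P * G - G * P))) - dP • (W * (Q * G - G * Q))) := by
          rw [k1, k2]
    _ = -((c + c') • (dP • (W * (Q * G - G * Q)) + dQ • (W * (P * G - G * P)))) := by
          module
end Key2
end FermiAux
/-- The fermionic derivative `∂_x f := w [v_x, f]`, where `v_x = w a_x`. -/
noncomputable def fermiD {ι : Type*} (w : FockSpace ι →L[ℂ] FockSpace ι)
    (a : ι → (FockSpace ι →L[ℂ] FockSpace ι)) (x : ι)
    (f : FockSpace ι →L[ℂ] FockSpace ι) : FockSpace ι →L[ℂ] FockSpace ι :=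
  w * ((w * a x) * f - f * (w * a x))

/-- The fermionic derivative `∂̄_x f := −w [v_x*, f]`, where `v_x = w a_x`. -/
noncomputable def fermiDBar {ι : Type*} (w : FockSpace ι →L[ℂ] FockSpace ι)
    (a : ι → (FockSpace ι →L[ℂ] FockSpace ι)) (x : ι)
    (f : FockSpace ι →L[ℂ] FockSpace ι) : FockSpace ι →L[ℂ] FockSpace ι :=
  -(w * (star (w * a x) * f - f * star (w * a x)))

/-- The one-site Fermi Ornstein–Uhlenbeck generator
`L⁰_x g = e^{h/2}([v_x,g]v_x* + v_x[g,v_x*]) + e^{−h/2}([v_x*,g]v_x + v_x*[g,v_x])`,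
with `v_x = w a_x`. -/
noncomputable def fermiOU {ι : Type*} (w : FockSpace ι →L[ℂ] FockSpace ι)
    (a : ι → (FockSpace ι →L[ℂ] FockSpace ι)) (h : ℝ) (x : ι)
    (g : FockSpace ι →L[ℂ] FockSpace ι) : FockSpace ι →L[ℂ] FockSpace ι :=
  (Real.exp (h / 2) : ℂ) •
      (((w * a x) * g - g * (w * a x)) * star (w * a x)
        + (w * a x) * (g * star (w * a x) - star (w * a x) * g)) +
  (Real.exp (-h / 2) : ℂ) •
      ((star (w * a x) * g - g * star (w * a x)) * (w * a x)
        + star (w * a x) * (g * (w * a x) - (w * a x) * g))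


namespace FermiAux
section Site
variable {ι : Type*} [LinearOrder ι]
variable (a : ι → (FockSpace ι →L[ℂ] FockSpace ι))
variable (ha : ∀ (x : ι) (X : Finset ι),
      a x (fockBasis X) =
        if x ∈ X then
          ((-1 : ℂ) ^ (X.filter (fun y => y < x)).card) • fockBasis (X.erase x)
        else 0)
variable (w : FockSpace ι →L[ℂ] FockSpace ι)
variable (hw : ∀ X : Finset ι, w (fockBasis X) = ((-1 : ℂ) ^ X.card) • fockBasis X)

lemma fermiOU_neg (h : ℝ) (x : ι) (g : FockSpace ι →L[ℂ] FockSpace ι) :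
    fermiOU w a h x (-g) = -(fermiOU w a h x g) := by
  have t1 : ∀ (P Q G : FockSpace ι →L[ℂ] FockSpace ι),
      (P * -G - -G * P) * Q + P * (-G * Q - Q * -G)
        = -((P * G - G * P) * Q + P * (G * Q - Q * G)) := by
    intros; noncomm_ring
  simp only [fermiOU, t1, smul_neg, ← neg_add]

include ha hw

lemma siteD (h : ℝ) (y x : ι) (g : FockSpace ι →L[ℂ] FockSpace ι) :
    fermiD w a y (fermiOU w a h x g) - fermiOU w a h x (fermiD w a y g)
      = if x = y then
          -((((Real.exp (h / 2) : ℂ)) + ((Real.exp (-h / 2) : ℂ))) • fermiD w a y g)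
        else 0 := by
  have key := fermi_key2 w (w * a y) (w * a x) (star (w * a x)) g
      (Real.exp (h / 2) : ℂ) (Real.exp (-h / 2) : ℂ) 0 (if y = x then (1 : ℂ) else 0)
      (rel_wv a ha w hw x) (rel_ws' a ha w hw x) (rel_vv a ha w hw y x)
      (rel_vs a ha w hw y x)
  simp only [fermiD, fermiOU]
  rw [key]
  by_cases hxy : x = y
  · subst hxy
    rw [if_pos rfl, if_pos rfl]
    simp only [zero_smul, zero_add, one_smul]
  · rw [if_neg (fun hh => hxy hh.symm), if_neg hxy]
    simp

lemma siteDBar (h : ℝ) (y x : ι) (g : FockSpace ι →L[ℂ] FockSpace ι) :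
    fermiDBar w a y (fermiOU w a h x g) - fermiOU w a h x (fermiDBar w a y g)
      = if x = y then
          -((((Real.exp (h / 2) : ℂ)) + ((Real.exp (-h / 2) : ℂ))) • fermiDBar w a y g)
        else 0 := by
  have key := fermi_key2 w (star (w * a y)) (w * a x) (star (w * a x)) g
      (Real.exp (h / 2) : ℂ) (Real.exp (-h / 2) : ℂ) (if y = x then (1 : ℂ) else 0) 0
      (rel_wv a ha w hw x) (rel_ws' a ha w hw x) (rel_sv a ha w hw y x)
      (rel_ss a ha w hw y x)
  simp only [fermiDBar]
  rw [fermiOU_neg a w h x, sub_neg_eq_add, neg_add_eq_sub, ← neg_sub]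
  simp only [fermiOU]
  rw [key]
  by_cases hxy : x = y
  · subst hxy
    rw [if_pos rfl, if_pos rfl]
    simp only [zero_smul, add_zero, one_smul, neg_neg, smul_neg]
  · rw [if_neg (fun hh => hxy hh.symm), if_neg hxy]
    simp

lemma commute_of_not_mem (Λ : Finset ι) (y : ι) (hy : y ∉ Λ)
    (f : FockSpace ι →L[ℂ] FockSpace ι)
    (hf : f ∈ StarAlgebra.adjoin ℂ (a '' (Λ : Set ι))) :
    (w * a y) * f = f * (w * a y) ∧ star (w * a y) * f = f * star (w * a y) := by
  induction hf using StarAlgebra.adjoin_induction with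
  | mem g hg =>
      obtain ⟨x, hxΛ, rfl⟩ := hg
      have hxy : x ≠ y := by rintro rfl; exact hy hxΛ
      have h1 : a y * a x = -(a x * a y) := eq_neg_of_add_eq_zero_left (rel_aa a ha y x)
      have h2 : star (a y) * a x = -(a x * star (a y)) := by
        have h0 := rel_astar_a a ha x y
        rw [if_neg hxy] at h0
        exact eq_neg_of_add_eq_zero_right h0
      constructor
      · rw [mul_assoc, h1, mul_neg, ← mul_assoc, rel_wa a ha w hw x, neg_mul, neg_neg,
          mul_assoc]
      · rw [rel_sax a ha w hw y, mul_assoc, rel_wa a ha w hw x, mul_neg, ← mul_assoc, h2,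
          neg_mul, neg_neg, mul_assoc]
  | algebraMap r => exact ⟨(Algebra.commutes r _).symm, (Algebra.commutes r _).symm⟩
  | add p q hp hq ihp ihq =>
      exact ⟨by rw [mul_add, ihp.1, ihq.1, ← add_mul],
        by rw [mul_add, ihp.2, ihq.2, ← add_mul]⟩
  | mul p q hp hq ihp ihq =>
      exact ⟨by rw [← mul_assoc, ihp.1, mul_assoc, ihq.1, ← mul_assoc],
        by rw [← mul_assoc, ihp.2, mul_assoc, ihq.2, ← mul_assoc]⟩
  | star p hp ih =>
      have key2 : ∀ (u pp : FockSpace ι →L[ℂ] FockSpace ι),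
          star u * pp = pp * star u → u * star pp = star pp * u := by
        intro u pp hupp
        have hst := congrArg star hupp
        rw [star_mul, star_mul, star_star] at hst
        exact hst.symm
      constructor
      · exact key2 (w * a y) p ih.2
      · have ih1' : star (star (w * a y)) * p = p * star (star (w * a y)) := by
          rw [star_star]; exact ih.1
        exact key2 (star (w * a y)) p ih1'

end Site
end FermiAux

set_option maxHeartbeats 1000000 in
/-- Intertwining relation between the Fermi Ornstein–Uhlenbeck generator and the
fermionic derivatives on locally supported observables:
`∂_y(𝓛₀ f) − 𝓛₀(∂_y f) = −2 cosh(h/2) ∂_y f`, and similarly for `∂̄_y`. -/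
theorem fermiOU_intertwining {ι : Type*} [LinearOrder ι]
    (a : ι → (FockSpace ι →L[ℂ] FockSpace ι))
    (ha : ∀ (x : ι) (X : Finset ι),
      a x (fockBasis X) =
        if x ∈ X then
          ((-1 : ℂ) ^ (X.filter (fun y => y < x)).card) • fockBasis (X.erase x)
        else 0)
    (w : FockSpace ι →L[ℂ] FockSpace ι)
    (hw : ∀ X : Finset ι, w (fockBasis X) = ((-1 : ℂ) ^ X.card) • fockBasis X)
    (h : ℝ) (Λ : Finset ι)
    (f : FockSpace ι →L[ℂ] FockSpace ι)
    (hf : f ∈ StarAlgebra.adjoin ℂ (a '' (Λ : Set ι)))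
    (y : ι) :
    fermiD w a y (∑ x ∈ Λ, fermiOU w a h x f)
        - ∑ x ∈ Λ, fermiOU w a h x (fermiD w a y f)
      = ((-(2 * Real.cosh (h / 2)) : ℝ) : ℂ) • fermiD w a y f ∧
    fermiDBar w a y (∑ x ∈ Λ, fermiOU w a h x f)
        - ∑ x ∈ Λ, fermiOU w a h x (fermiDBar w a y f)
      = ((-(2 * Real.cosh (h / 2)) : ℝ) : ℂ) • fermiDBar w a y f := by
  classical
  have hsc : ((-(2 * Real.cosh (h / 2)) : ℝ) : ℂ)
      = -(((Real.exp (h / 2) : ℂ)) + ((Real.exp (-h / 2) : ℂ))) := by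
    have e : Real.exp (-h / 2) = Real.exp (-(h / 2)) := by rw [neg_div]
    rw [Real.cosh_eq, e]
    push_cast
    ring
  constructor
  · have hsum : fermiD w a y (∑ x ∈ Λ, fermiOU w a h x f)
        = ∑ x ∈ Λ, fermiD w a y (fermiOU w a h x f) := by
      simp only [fermiD, Finset.mul_sum, Finset.sum_mul, ← Finset.sum_sub_distrib]
    rw [hsum, ← Finset.sum_sub_distrib,
      Finset.sum_congr rfl (fun x _ => FermiAux.siteD a ha w hw h y x f),
      Finset.sum_ite_eq' Λ y
        (fun _ => -((((Real.exp (h / 2) : ℂ)) + ((Real.exp (-h / 2) : ℂ)))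
          • fermiD w a y f))]
    by_cases hy : y ∈ Λ
    · rw [if_pos hy, hsc, neg_smul]
    · rw [if_neg hy]
      have hcomm := FermiAux.commute_of_not_mem a ha w hw Λ y hy f hf
      have hD0 : fermiD w a y f = 0 := by
        rw [fermiD, hcomm.1, sub_self, mul_zero]
      rw [hD0, smul_zero]
  · have hsum : fermiDBar w a y (∑ x ∈ Λ, fermiOU w a h x f)
        = ∑ x ∈ Λ, fermiDBar w a y (fermiOU w a h x f) := by
      simp only [fermiDBar, Finset.mul_sum, Finset.sum_mul, ← Finset.sum_sub_distrib,
        ← Finset.sum_neg_distrib]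
    rw [hsum, ← Finset.sum_sub_distrib,
      Finset.sum_congr rfl (fun x _ => FermiAux.siteDBar a ha w hw h y x f),
      Finset.sum_ite_eq' Λ y
        (fun _ => -((((Real.exp (h / 2) : ℂ)) + ((Real.exp (-h / 2) : ℂ)))
          • fermiDBar w a y f))]
    by_cases hy : y ∈ Λ
    · rw [if_pos hy, hsc, neg_smul]
    · rw [if_neg hy]
      have hcomm := FermiAux.commute_of_not_mem a ha w hw Λ y hy f hf
      have hD0 : fermiDBar w a y f = 0 := by
        rw [fermiDBar, hcomm.2, sub_self, mul_zero, neg_zero]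
      rw [hD0, smul_zero]
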